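/- Let M ∈ SL(n, ℝ) with rows V₁,…,V_n, and let M = N·A·K be its Iwasawa decomposition (N unit upper triangular, A = diag(y₁/y₀, y₂/y₁, …, y_n/y_{n−1}) with y₀ = y_n = 1 and all y_i > 0, K ∈ SO(n)). Then for each μ ∈ {1,…,n−1}, y_μ^{−2} equals the Gram determinant of the rows V_{μ+1},…,V_n, i.e., y_μ^{−2} = det( (V_i · V_j)_{i,j = μ+1,…,n} ). -/

import Mathlib

open Finset Matrix

lemma telescope_aux (y : ℕ → ℝ) (μ : ℕ) :
    ∀ m : ℕ, (∀ i, μ ≤ i → i ≤ μ + m → y i ≠ 0) →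
      ∏ i ∈ Finset.range m, (y (μ + i + 1) / y (μ + i)) = y (μ + m) / y μ := by
  intro m
  induction m with
  | zero =>
    intro h
    have := h μ le_rfl (by omega)
    simp [div_self this]
  | succ k ih =>
    intro h
    rw [Finset.prod_range_succ, ih (fun i h1 h2 => h i h1 (by omega))]
    have hne : y (μ + k) ≠ 0 := h (μ + k) (by omega) (by omega)
    rw [div_mul_div_comm, mul_comm (y μ) (y (μ + k)), mul_div_mul_left _ _ hne]
    rfl

/-- In the Iwasawa decomposition of `M ∈ SL(n, ℝ)` with dilatons `y`, `y_μ⁻²` equals the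
Gram determinant of the rows `V_{μ+1}, …, V_n` of `M`. -/
theorem stmt_12 (n : ℕ) (M N A K : Matrix (Fin n) (Fin n) ℝ)
    (hM : M.det = 1) (hdec : M = N * A * K)
    (hNd : ∀ i, N i i = 1) (hN0 : ∀ i j : Fin n, j < i → N i j = 0)
    (y : ℕ → ℝ) (hy0 : y 0 = 1) (hyn : y n = 1) (hypos : ∀ i, i ≤ n → 0 < y i)
    (hA : ∀ i j : Fin n, i ≠ j → A i j = 0)
    (hAy : ∀ i : Fin n, A i i = y (i.1 + 1) / y i.1)
    (hK : K * K.transpose = 1) (hKdet : K.det = 1) :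
    ∀ μ : ℕ, (hμ1 : 1 ≤ μ) → (hμ2 : μ ≤ n - 1) →
      ((y μ)⁻¹) ^ 2 =
        (Matrix.of fun i j : Fin (n - μ) =>
          ∑ t : Fin n,
            M ⟨μ + i.1, by have := i.2; omega⟩ t *
            M ⟨μ + j.1, by have := j.2; omega⟩ t).det := by
  intro μ hμ1 hμ2
  have hμn : μ ≤ n := by omega
  set m := n - μ with hm
  have hmn : μ + m = n := by omega
  have hAt : A.transpose = A := by
    ext i j
    by_cases h : i = j
    · simp [h]
    · rw [Matrix.transpose_apply, hA j i (fun hh => h hh.symm), hA i j h]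
  have hMMt : M * M.transpose = N * (A * A) * N.transpose := by
    rw [hdec]
    simp only [Matrix.transpose_mul, hAt]
    calc N * A * K * (K.transpose * (A * N.transpose))
        = N * (A * (K * K.transpose) * (A * N.transpose)) := by
          simp only [Matrix.mul_assoc]
      _ = N * (A * A) * N.transpose := by
          rw [hK, Matrix.mul_one]; simp only [Matrix.mul_assoc]
  have hAA : A * A = Matrix.diagonal (fun k => (A k k) ^ 2) := by
    ext i j
    by_cases h : i = j
    · subst h
      rw [Matrix.mul_apply, Finset.sum_eq_single i]
      · simp [Matrix.diagonal, sq]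
      · intro b _ hb
        rw [hA i b (fun hh => hb hh.symm), zero_mul]
      · simp
    · rw [Matrix.mul_apply, Matrix.diagonal_apply_ne _ h, Finset.sum_eq_zero]
      intro k _
      by_cases hk : i = k
      · subst hk; rw [hA i j h, mul_zero]
      · rw [hA i k hk, zero_mul]
  have key : ∀ a b : Fin n, (∑ t, M a t * M b t) = ∑ k, N a k * ((A k k) ^ 2 * N b k) := by
    intro a b
    have h1 : (M * M.transpose) a b = ∑ t, M a t * M b t := by
      simp [Matrix.mul_apply, Matrix.transpose_apply]
    rw [← h1, hMMt, hAA, Matrix.mul_apply]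
    refine Finset.sum_congr rfl fun k _ => ?_
    rw [Matrix.mul_diagonal, Matrix.transpose_apply]
    ring
  let e : Fin m → Fin n := fun i => ⟨μ + i.1, by omega⟩
  have hsum : ∀ f : Fin n → ℝ, (∀ k : Fin n, k.1 < μ → f k = 0) →
      ∑ k, f k = ∑ i : Fin m, f (e i) := by
    intro f hf
    set F : ℕ → ℝ := fun k => if h : k < n then f ⟨k, h⟩ else 0 with hF
    have h1 : ∑ k, f k = ∑ k ∈ Finset.range n, F k := by
      rw [← Fin.sum_univ_eq_sum_range]
      refine Finset.sum_congr rfl fun k _ => ?_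
      simp [hF, k.2]
    have h2 : ∑ i : Fin m, f (e i) = ∑ k ∈ Finset.range m, F (μ + k) := by
      rw [← Fin.sum_univ_eq_sum_range]
      refine Finset.sum_congr rfl fun k _ => ?_
      have hk : μ + k.1 < n := by omega
      simp only [hF, dif_pos hk, e]
    rw [h1, h2, ← hmn, Finset.sum_range_add]
    have h3 : ∑ k ∈ Finset.range μ, F k = 0 := by
      refine Finset.sum_eq_zero fun k hk => ?_
      have hk' : k < μ := Finset.mem_range.mp hk
      have hkn : k < n := by omega
      simp only [hF, dif_pos hkn]
      exact hf _ hk'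
    rw [h3, zero_add]
  let N' : Matrix (Fin m) (Fin m) ℝ := Matrix.of fun i j => N (e i) (e j)
  have hG : (Matrix.of fun i j : Fin m =>
        ∑ t : Fin n, M ⟨μ + i.1, by omega⟩ t * M ⟨μ + j.1, by omega⟩ t)
      = N' * Matrix.diagonal (fun i : Fin m => (A (e i) (e i)) ^ 2) * N'.transpose := by
    ext a b
    rw [Matrix.of_apply]
    have : (∑ t : Fin n, M (e a) t * M (e b) t)
        = ∑ i : Fin m, N (e a) (e i) * ((A (e i) (e i)) ^ 2 * N (e b) (e i)) := by
      rw [key]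
      exact hsum _ (fun k hk => by
        rw [hN0 (e a) k (show k < e a from by
          simp only [Fin.lt_def, e]; omega), zero_mul])
    rw [this]
    rw [Matrix.mul_apply]
    refine Finset.sum_congr rfl fun i _ => ?_
    rw [Matrix.mul_diagonal, Matrix.transpose_apply]
    simp only [N', Matrix.of_apply]
    ring
  rw [hG, Matrix.det_mul, Matrix.det_mul, Matrix.det_transpose]
  have hN' : N'.det = 1 := by
    have hbt : N'.BlockTriangular id := by
      intro i j hij
      exact hN0 (e i) (e j) (by
        simp only [id] at hij
        simp only [Fin.lt_def, e] at hij ⊢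
        omega)
    rw [Matrix.det_of_upperTriangular hbt]
    simp [N', hNd]
  have hprod : (∏ i : Fin m, A (e i) (e i)) = (y μ)⁻¹ := by
    have h1 : ∀ i : Fin m, A (e i) (e i) = y (μ + i.1 + 1) / y (μ + i.1) := fun i => hAy (e i)
    rw [Finset.prod_congr rfl (fun i _ => h1 i)]
    rw [Fin.prod_univ_eq_prod_range (fun i => y (μ + i + 1) / y (μ + i)) m]
    rw [telescope_aux y μ m (fun i h1 h2 => ne_of_gt (hypos i (by omega)))]
    rw [hmn, hyn, one_div]
  have hdiag : (Matrix.diagonal fun i : Fin m => (A (e i) (e i)) ^ 2).det = ((y μ)⁻¹) ^ 2 := by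
    rw [Matrix.det_diagonal, Finset.prod_pow, hprod]
  rw [hN', hdiag, one_mul, mul_one]
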